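/- Let E and F be finite-dimensional real inner product spaces and μ > 0. Let A : E → E and C : F → F be symmetric linear maps such that ⟨A u, u⟩ ≥ μ·‖u‖² for all u ∈ E and ⟨C v, v⟩ ≤ −μ·‖v‖² for all v ∈ F, and let B : E → F be an arbitrary linear map with adjoint B* : F → E. If λ ∈ ℝ, u ∈ E, v ∈ F with (u, v) ≠ (0, 0) satisfy the eigenvalue equations A u + B* v = λ·u and B u + C v = λ·v, then |λ| ≥ μ. -/
import Mathlib


open scoped InnerProductSpace

theorem strongly_convex_concave_hessian_eigenvalue_bound
    {E F : Type*}
    [NormedAddCommGroup E] [InnerProductSpace ℝ E] [FiniteDimensional ℝ E]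
    [NormedAddCommGroup F] [InnerProductSpace ℝ F] [FiniteDimensional ℝ F]
    (μ : ℝ) (hμ : 0 < μ)
    (A : E →ₗ[ℝ] E) (C : F →ₗ[ℝ] F) (B : E →ₗ[ℝ] F)
    (hA : A.IsSymmetric) (hC : C.IsSymmetric)
    (hAμ : ∀ u : E, μ * ‖u‖ ^ 2 ≤ ⟪A u, u⟫_ℝ)
    (hCμ : ∀ v : F, ⟪C v, v⟫_ℝ ≤ -μ * ‖v‖ ^ 2)
    (lam : ℝ) (u : E) (v : F) (huv : (u, v) ≠ (0, 0))
    (h1 : A u + LinearMap.adjoint B v = lam • u)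
    (h2 : B u + C v = lam • v) :
    μ ≤ |lam| := by
  set a := ‖u‖ ^ 2 with ha
  set b := ‖v‖ ^ 2 with hb
  have hs : 0 < a + b := by
    rcases (not_and_or.mp (by simpa [Prod.ext_iff] using huv)) with h | h
    · have h1 : 0 < a := pow_pos (norm_pos_iff.mpr h) 2
      have h2 : 0 ≤ b := by positivity
      linarith
    · have h1 : 0 < b := pow_pos (norm_pos_iff.mpr h) 2
      have h2 : 0 ≤ a := by positivity
      linarith
  have e1 : ⟪A u, u⟫_ℝ + ⟪B u, v⟫_ℝ = lam * a := by
    have := congrArg (fun x => ⟪x, u⟫_ℝ) h1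
    simp only [inner_add_left, inner_smul_left, RCLike.conj_to_real] at this
    rw [LinearMap.adjoint_inner_left, real_inner_comm (B u) v, real_inner_self_eq_norm_sq] at this
    rw [ha]; exact this
  have e2 : ⟪B u, v⟫_ℝ + ⟪C v, v⟫_ℝ = lam * b := by
    have := congrArg (fun x => ⟪x, v⟫_ℝ) h2
    simp only [inner_add_left, inner_smul_left, RCLike.conj_to_real] at this
    rw [real_inner_self_eq_norm_sq] at this
    rw [hb]; exact this
  have key : μ * (a + b) ≤ lam * (a - b) := by
    have h3 := hAμ u
    have h4 := hCμ v
    nlinarith [e1, e2]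
  have habs : lam * (a - b) ≤ |lam| * (a + b) := by
    calc lam * (a - b) ≤ |lam * (a - b)| := le_abs_self _
    _ = |lam| * |a - b| := abs_mul _ _
    _ ≤ |lam| * (a + b) := by
        apply mul_le_mul_of_nonneg_left _ (abs_nonneg _)
        rw [abs_le]
        constructor <;> nlinarith [sq_nonneg ‖u‖, sq_nonneg ‖v‖]
  have := key.trans habs
  exact le_of_mul_le_mul_right (by linarith) hs
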